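/- Let G be a finite multidigraph that is k-out-regular for an integer k > 1, with an edge e* = (w*, v*). Then the kernel of the homomorphism τ̄ : K(𝓛G, e*) → cok ψ induced by the modified target map τ is exactly the k-torsion subgroup of K(𝓛G, e*), i.e. {x ∈ K(𝓛G, e*) : k·x = 0}. -/

import Mathlib

open Finsupp

/-- The Laplacian of a multidigraph with edge tail map `t` and head map `h`,
as a linear endomorphism of the free abelian group on the vertices. -/
noncomputable def lap {V E : Type*} [Fintype E] [DecidableEq V] (t h : E → V) :
    (V →₀ ℤ) →ₗ[ℤ] (V →₀ ℤ) :=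
  Finsupp.lift (V →₀ ℤ) ℤ V fun v =>
    ∑ e : E, if t e = v then Finsupp.single (h e) (1 : ℤ) - Finsupp.single v 1 else 0

/-- The modified Laplacian `φ_{G,w}` : sends `v ↦ Δ_G v` for `v ≠ w`, and `w ↦ w`. -/
noncomputable def phiMod {V E : Type*} [Fintype E] [DecidableEq V] (t h : E → V) (w : V) :
    (V →₀ ℤ) →ₗ[ℤ] (V →₀ ℤ) :=
  Finsupp.lift (V →₀ ℤ) ℤ V fun v =>
    if v = w then Finsupp.single w 1 else lap t h (Finsupp.single v 1)

/-- Edges of the directed line graph: pairs `(e, f)` with `e⁺ = f⁻`. -/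
def LineEdge {V E : Type*} (t h : E → V) : Type _ := {p : E × E // h p.1 = t p.2}

instance {V E : Type*} [Fintype E] [DecidableEq V] (t h : E → V) :
    Fintype (LineEdge t h) := by
  unfold LineEdge; infer_instance

/-- in-degree of a vertex -/
def indeg {V E : Type*} [Fintype E] [DecidableEq V] (h : E → V) (v : V) : ℕ :=
  (Finset.univ.filter fun e => h e = v).card

/-- out-degree of a vertex -/
def outdeg {V E : Type*} [Fintype E] [DecidableEq V] (t : E → V) (v : V) : ℕ :=
  (Finset.univ.filter fun e => t e = v).card

/-- The modified target map `τ`: `e ↦ e⁺` for `e ≠ e*`, `e* ↦ 0`. -/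
noncomputable def tau {V E : Type*} [DecidableEq E] (h : E → V) (estar : E) :
    (E →₀ ℤ) →ₗ[ℤ] (V →₀ ℤ) :=
  Finsupp.lift (V →₀ ℤ) ℤ E fun e =>
    if e = estar then 0 else Finsupp.single (h e) 1

/-- The map `ρ`: `e ↦ Δ_G(w*) − v* − w* + e⁺` for `e ≠ e*`, `e* ↦ 0`,
where `w* = t e*` and `v* = h e*`. -/
noncomputable def rho {V E : Type*} [Fintype E] [DecidableEq V] [DecidableEq E]
    (t h : E → V) (estar : E) : (E →₀ ℤ) →ₗ[ℤ] (V →₀ ℤ) :=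
  Finsupp.lift (V →₀ ℤ) ℤ E fun e =>
    if e = estar then 0 else
      lap t h (Finsupp.single (t estar) 1) - Finsupp.single (h estar) 1
        - Finsupp.single (t estar) 1 + Finsupp.single (h e) 1

/-- The map `ρ₀`: `v ↦ Δ_G(w*) − v* − w* + v`. -/
noncomputable def rho0 {V E : Type*} [Fintype E] [DecidableEq V] (t h : E → V) (estar : E) :
    (V →₀ ℤ) →ₗ[ℤ] (V →₀ ℤ) :=
  Finsupp.lift (V →₀ ℤ) ℤ V fun v =>
    lap t h (Finsupp.single (t estar) 1) - Finsupp.single (h estar) 1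
      - Finsupp.single (t estar) 1 + Finsupp.single v 1

/-- The map `ψ`: `v ↦ Δ_G v` for `v ≠ w*`, and `w* ↦ Δ_G(w*) − v*`. -/
noncomputable def psi {V E : Type*} [Fintype E] [DecidableEq V] (t h : E → V) (estar : E) :
    (V →₀ ℤ) →ₗ[ℤ] (V →₀ ℤ) :=
  Finsupp.lift (V →₀ ℤ) ℤ V fun v =>
    if v = t estar then
      lap t h (Finsupp.single (t estar) 1) - Finsupp.single (h estar) 1
    else lap t h (Finsupp.single v 1)

/-- The map `σ`: `v ↦ Σ_{e⁻ = v} e`. -/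
noncomputable def sigmaMap {V E : Type*} [Fintype E] [DecidableEq V] (t : E → V) :
    (V →₀ ℤ) →ₗ[ℤ] (E →₀ ℤ) :=
  Finsupp.lift (E →₀ ℤ) ℤ V fun v =>
    ∑ e : E, if t e = v then Finsupp.single e (1 : ℤ) else 0

section Helpers

set_option linter.unusedSectionVars false
variable {V E : Type*} [Fintype E] [DecidableEq V] [DecidableEq E]

lemma lift_single₁ {X M : Type*} [AddCommGroup M] (f : X → M) (a : X) :
    (Finsupp.lift M ℤ X f) (Finsupp.single a 1) = f a := by
  rw [Finsupp.lift_apply, Finsupp.sum_single_index (by simp), one_smul]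

lemma line_sum {M : Type*} [AddCommGroup M] (t h : E → V) (e : E) (G : E → M) :
    (∑ p : LineEdge t h, if p.1.1 = e then G p.1.2 else 0)
      = ∑ f : E, if t f = h e then G f else 0 := by
  rw [← Finset.sum_filter, ← Finset.sum_filter]
  apply Finset.sum_bij (fun (p : LineEdge t h) _ => p.1.2)
  · intro p hp
    simp only [Finset.mem_filter, Finset.mem_univ, true_and] at hp ⊢
    rw [← p.2, hp]
  · intro p hp q hq hpq
    simp only [Finset.mem_filter, Finset.mem_univ, true_and] at hp hq
    exact Subtype.ext (Prod.ext (hp.trans hq.symm) hpq)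
  · intro f hf
    simp only [Finset.mem_filter, Finset.mem_univ, true_and] at hf ⊢
    exact ⟨⟨(e, f), hf.symm⟩, rfl, rfl⟩
  · intro p hp; rfl

lemma const_sum (t : E → V) (k : ℕ) (hreg : ∀ v, outdeg t v = k) (v : V)
    {M : Type*} [AddCommGroup M] (m : M) :
    (∑ f : E, if t f = v then m else 0) = (k : ℤ) • m := by
  rw [← Finset.sum_filter, Finset.sum_const]
  rw [show (Finset.univ.filter fun f => t f = v).card = k from hreg v]
  exact (natCast_zsmul m k).symm

lemma sigma_single (t : E → V) (v : V) :
    sigmaMap t (Finsupp.single v 1)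
      = ∑ f : E, if t f = v then Finsupp.single f (1 : ℤ) else 0 :=
  lift_single₁ _ v

lemma tau_single (h : E → V) (estar : E) (e : E) :
    tau h estar (Finsupp.single e 1)
      = if e = estar then 0 else Finsupp.single (h e) 1 :=
  lift_single₁ _ e

lemma tau_single_estar (h : E → V) (estar : E) (c : ℤ) :
    tau h estar (Finsupp.single estar c) = 0 := by
  rw [← Finsupp.smul_single_one, map_smul, tau_single, if_pos rfl, smul_zero]

lemma lap_single (t h : E → V) (k : ℕ) (hreg : ∀ v, outdeg t v = k) (v : V) :
    lap t h (Finsupp.single v 1)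
      = (∑ f : E, if t f = v then Finsupp.single (h f) (1:ℤ) else 0)
        - (k:ℤ) • Finsupp.single v 1 := by
  rw [lap, lift_single₁]
  rw [Finset.sum_congr rfl (fun f _ => show (if t f = v then Finsupp.single (h f) (1:ℤ) - Finsupp.single v 1 else 0) = (if t f = v then Finsupp.single (h f) (1:ℤ) else 0) - (if t f = v then Finsupp.single v (1:ℤ) else 0) by split <;> simp)]
  rw [Finset.sum_sub_distrib, const_sum t k hreg]

lemma psi_single (t h : E → V) (estar : E) (v : V) :
    psi t h estar (Finsupp.single v 1)
      = if v = t estar then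
          lap t h (Finsupp.single (t estar) 1) - Finsupp.single (h estar) 1
        else lap t h (Finsupp.single v 1) :=
  lift_single₁ _ v

lemma phi_single_estar (t h : E → V) (estar : E) :
    phiMod (fun p : LineEdge t h => p.1.1) (fun p : LineEdge t h => p.1.2) estar
      (Finsupp.single estar 1) = Finsupp.single estar 1 := by
  rw [phiMod, lift_single₁, if_pos rfl]

lemma phi_single_estar' (t h : E → V) (estar : E) (c : ℤ) :
    phiMod (fun p : LineEdge t h => p.1.1) (fun p : LineEdge t h => p.1.2) estar
      (Finsupp.single estar c) = Finsupp.single estar c := by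
  rw [← Finsupp.smul_single_one, map_smul, phi_single_estar]

lemma phi_single (t h : E → V) (estar : E) (k : ℕ) (hreg : ∀ v, outdeg t v = k)
    {e : E} (he : e ≠ estar) :
    phiMod (fun p : LineEdge t h => p.1.1) (fun p : LineEdge t h => p.1.2) estar
      (Finsupp.single e 1)
      = sigmaMap t (Finsupp.single (h e) 1) - (k:ℤ) • Finsupp.single e 1 := by
  rw [phiMod, lift_single₁, if_neg he, lap, lift_single₁]
  rw [Finset.sum_congr rfl (fun p _ => show (if p.1.1 = e then Finsupp.single p.1.2 (1:ℤ) - Finsupp.single e 1 else 0) = (if p.1.1 = e then Finsupp.single p.1.2 (1:ℤ) else 0) - (if p.1.1 = e then Finsupp.single e (1:ℤ) else 0) by split <;> simp)]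
  rw [Finset.sum_sub_distrib, line_sum t h e (fun f => Finsupp.single f (1:ℤ)),
    line_sum t h e (fun _ => Finsupp.single e (1:ℤ)), sigma_single]
  congr 1
  exact const_sum t k hreg (h e) _

end Helpers

section Main
set_option linter.unusedSectionVars false
variable {V E : Type*} [Fintype E] [DecidableEq V] [DecidableEq E]

/-- Identity A: τ ∘ σ = ψ + k • id -/
lemma tau_sigma_eq (t h : E → V) (estar : E) (k : ℕ) (hreg : ∀ v, outdeg t v = k) :
    (tau h estar).comp (sigmaMap t) = psi t h estar + (k:ℤ) • LinearMap.id := by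
  apply Finsupp.lhom_ext'
  intro v
  apply LinearMap.ext_ring
  simp only [LinearMap.comp_apply, Finsupp.lsingle_apply, LinearMap.add_apply,
    LinearMap.smul_apply, LinearMap.id_apply]
  rw [sigma_single, map_sum, psi_single]
  rw [Finset.sum_congr rfl (fun f _ => apply_ite (tau h estar) (t f = v) (Finsupp.single f 1) 0)]
  simp only [map_zero, tau_single]
  by_cases hv : v = t estar
  · subst hv
    rw [if_pos rfl, lap_single t h k hreg]
    rw [Finset.sum_congr rfl (fun f _ => show (if t f = t estar then (if f = estar then 0 else Finsupp.single (h f) (1:ℤ)) else 0) = (if t f = t estar then Finsupp.single (h f) (1:ℤ) else 0) - (if f = estar then Finsupp.single (h estar) (1:ℤ) else 0) from by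
      by_cases h1 : f = estar
      · subst h1; simp
      · simp [h1])]
    rw [Finset.sum_sub_distrib, Finset.sum_ite_eq' Finset.univ estar (fun _ => Finsupp.single (h estar) (1:ℤ)), if_pos (Finset.mem_univ _)]
    abel
  · rw [if_neg hv, lap_single t h k hreg]
    rw [Finset.sum_congr rfl (fun f _ => show (if t f = v then (if f = estar then 0 else Finsupp.single (h f) (1:ℤ)) else 0) = (if t f = v then Finsupp.single (h f) (1:ℤ) else 0) from by
      by_cases h1 : f = estar
      · subst h1
        rw [if_pos rfl, if_neg (fun hh => hv hh.symm), if_neg (fun hh => hv hh.symm)]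
      · rw [if_neg h1])]
    abel

/-- Identity C: φ = σ ∘ τ − k • id + (k+1) • π -/
lemma phi_eq (t h : E → V) (estar : E) (k : ℕ) (hreg : ∀ v, outdeg t v = k) :
    phiMod (fun p : LineEdge t h => p.1.1) (fun p : LineEdge t h => p.1.2) estar
      = (sigmaMap t).comp (tau h estar) - (k:ℤ) • LinearMap.id
        + ((k:ℤ)+1) • ((Finsupp.lsingle estar).comp (Finsupp.lapply estar)) := by
  apply Finsupp.lhom_ext'
  intro e
  apply LinearMap.ext_ring
  simp only [LinearMap.comp_apply, Finsupp.lsingle_apply, LinearMap.add_apply,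
    LinearMap.sub_apply, LinearMap.smul_apply, LinearMap.id_apply, Finsupp.lapply_apply]
  by_cases he : e = estar
  · subst he
    rw [phi_single_estar, tau_single, if_pos rfl, map_zero, Finsupp.single_eq_same]
    module
  · rw [phi_single t h estar k hreg he, tau_single, if_neg he,
      Finsupp.single_eq_of_ne' he, Finsupp.single_zero, smul_zero, add_zero]

end Main

section Main2
set_option linter.unusedSectionVars false
variable {V E : Type*} [Fintype E] [DecidableEq V] [DecidableEq E]

lemma sigma_coeff (t : E → V) (x : V →₀ ℤ) (e : E) :
    (sigmaMap t x) e = x (t e) := by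
  induction x using Finsupp.induction_linear with
  | zero => simp
  | add f g hf hg => rw [map_add, Finsupp.add_apply, Finsupp.add_apply, hf, hg]
  | single a b =>
    rw [← Finsupp.smul_single_one, map_smul, Finsupp.smul_apply, sigma_single,
      Finset.sum_apply']
    rw [Finset.sum_congr rfl (fun f _ => show (if t f = a then Finsupp.single f (1:ℤ) else 0) e = if f = e then (if t e = a then (1:ℤ) else 0) else 0 from by
      by_cases h1 : f = e
      · subst h1; split <;> simp
      · rw [if_neg h1]
        split
        · exact Finsupp.single_eq_of_ne' h1
        · rfl)]
    rw [Finset.sum_ite_eq' Finset.univ e, if_pos (Finset.mem_univ _),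
      Finsupp.smul_apply, Finsupp.single_apply]
    by_cases h2 : t e = a
    · rw [if_pos h2, if_pos h2.symm]
    · rw [if_neg h2, if_neg (fun hh => h2 hh.symm)]

lemma exists_edge (t : E → V) (estar : E) (k : ℕ) (hk : 1 < k)
    (hreg : ∀ v, outdeg t v = k) (v : V) : ∃ e, e ≠ estar ∧ t e = v := by
  by_contra hc
  push_neg at hc
  have hsub : (Finset.univ.filter fun e => t e = v) ⊆ {estar} := by
    intro e he
    simp only [Finset.mem_filter, Finset.mem_univ, true_and] at he
    simp only [Finset.mem_singleton]
    by_contra hne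
    exact hc e hne he
  have h1 := Finset.card_le_card hsub
  rw [Finset.card_singleton] at h1
  have h2 : outdeg t v = k := hreg v
  rw [outdeg] at h2
  omega

end Main2

/-- for a `k`-out-regular graph with `k > 1`, the kernel of the
induced homomorphism `τ̄ : K(𝓛G, e*) → cok ψ` is exactly the `k`-torsion
subgroup of `K(𝓛G, e*)`. -/
theorem ker_tau_bar_eq_k_torsion
    {V E : Type*} [Fintype E] [DecidableEq V] [DecidableEq E]
    (t h : E → V) (estar : E) (k : ℕ) (hk : 1 < k)
    (hreg : ∀ v : V, outdeg t v = k) :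
    ∀ τbar : ((E →₀ ℤ) ⧸ LinearMap.range
          (phiMod (fun p : LineEdge t h => p.1.1) (fun p : LineEdge t h => p.1.2) estar)) →ₗ[ℤ]
        ((V →₀ ℤ) ⧸ LinearMap.range (psi t h estar)),
      (∀ x : E →₀ ℤ,
        τbar (Submodule.Quotient.mk x) = Submodule.Quotient.mk (tau h estar x)) →
      LinearMap.ker τbar =
        Submodule.torsionBy ℤ ((E →₀ ℤ) ⧸ LinearMap.range
          (phiMod (fun p : LineEdge t h => p.1.1) (fun p : LineEdge t h => p.1.2) estar)) (k : ℤ) := by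
  intro τbar hτbar
  have hφ : ∀ y : E →₀ ℤ,
      phiMod (fun p : LineEdge t h => p.1.1) (fun p : LineEdge t h => p.1.2) estar y
        = sigmaMap t (tau h estar y) - (k:ℤ) • y
          + ((k:ℤ)+1) • Finsupp.single estar (y estar) := by
    intro y
    rw [phi_eq t h estar k hreg]
    simp only [LinearMap.add_apply, LinearMap.sub_apply, LinearMap.smul_apply,
      LinearMap.comp_apply, LinearMap.id_apply, Finsupp.lsingle_apply, Finsupp.lapply_apply]
  have hτσ : ∀ y : V →₀ ℤ,
      tau h estar (sigmaMap t y) = psi t h estar y + (k:ℤ) • y := by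
    intro y
    have h2 := LinearMap.congr_fun (tau_sigma_eq t h estar k hreg) y
    simpa using h2
  ext q
  obtain ⟨x, rfl⟩ := Submodule.Quotient.mk_surjective _ q
  simp only [LinearMap.mem_ker, Submodule.mem_torsionBy_iff]
  constructor
  · intro hker
    rw [hτbar x, Submodule.Quotient.mk_eq_zero] at hker
    obtain ⟨u, hu⟩ := hker
    rw [← Submodule.Quotient.mk_smul, Submodule.Quotient.mk_eq_zero]
    refine ⟨sigmaMap t u - ((k:ℤ)+1) • Finsupp.single estar ((sigmaMap t u) estar)
      - x + ((k:ℤ)+1) • Finsupp.single estar (x estar), ?_⟩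
    have e1 := hφ (sigmaMap t u)
    rw [hτσ u, hu, map_add, map_smul] at e1
    rw [map_add, map_sub, map_sub, map_smul, map_smul, phi_single_estar' t h estar,
      phi_single_estar' t h estar, e1, hφ x]
    abel
  · intro htor
    rw [hτbar x, Submodule.Quotient.mk_eq_zero]
    rw [← Submodule.Quotient.mk_smul, Submodule.Quotient.mk_eq_zero] at htor
    obtain ⟨y, hy⟩ := htor
    have h3 : sigmaMap t (tau h estar y)
        = (k:ℤ) • x + (k:ℤ) • y - ((k:ℤ)+1) • Finsupp.single estar (y estar) := by
      have h0 := (hφ y).symm.trans hy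
      rw [← h0]
      abel
    have hdvd : ∀ v, (k:ℤ) ∣ (tau h estar y) v := by
      intro v
      obtain ⟨e, hene, hte⟩ := exists_edge t estar k hk hreg v
      have h4 := DFunLike.congr_fun h3 e
      rw [sigma_coeff, hte] at h4
      simp only [Finsupp.add_apply, Finsupp.sub_apply, Finsupp.smul_apply, smul_eq_mul,
        Finsupp.single_apply, if_neg (show ¬ estar = e from fun hh => hene hh.symm),
        mul_zero, sub_zero] at h4
      exact ⟨x e + y e, by rw [h4]; ring⟩
    refine ⟨(tau h estar y).mapRange (fun a => a / (k:ℤ)) (by simp), ?_⟩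
    have hkn : (k:ℤ) • (tau h estar y).mapRange (fun a => a / (k:ℤ)) (by simp)
        = tau h estar y := by
      ext v
      rw [Finsupp.smul_apply, Finsupp.mapRange_apply, smul_eq_mul,
        Int.mul_ediv_cancel' (hdvd v)]
    have h6 : tau h estar
        (phiMod (fun p : LineEdge t h => p.1.1) (fun p : LineEdge t h => p.1.2) estar y)
        = psi t h estar (tau h estar y) := by
      rw [hφ y, map_add, map_sub, map_smul, map_smul, tau_single_estar,
        hτσ (tau h estar y), smul_zero]
      abel
    have h5 : (k:ℤ) • psi t h estar ((tau h estar y).mapRange (fun a => a / (k:ℤ)) (by simp))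
        = (k:ℤ) • tau h estar x := by
      rw [← map_smul, hkn, ← h6, ← map_smul, ← hy]
    have kne : (k:ℤ) ≠ 0 := by exact_mod_cast (by omega : k ≠ 0)
    ext v
    have h7 := DFunLike.congr_fun h5 v
    simp only [Finsupp.smul_apply, smul_eq_mul] at h7
    exact mul_left_cancel₀ kne h7
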